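/- Let T > 0, fa > 0, and let fa′, gb′, μ0, η0, ā, b̄, a, b ∈ ℝ, and fix t ∈ [0,T) with t < T. For φ > 0 set γ(φ) := √(φ/fa) and define S(φ) := c1(φ)·I1L(φ) + c2(φ)·I2L(φ) + c3(φ)·I3L(φ) + c4(φ)·I4L(φ), where c1(φ) := −γ(φ)²·fa′·μ0, c2(φ) := −γ(φ)²·fa′·(a − ā − t·μ0), c3(φ) := γ(φ)·gb′·η0, c4(φ) := γ(φ)·gb′·(b − b̄ − t·η0), and, writing γ := γ(φ), I1L(φ) := [ exp(2γ(t+T))·(4γ²(T²−t²) − 2) + exp(4γt)·(1−2γt) + (2γt+1)·exp(4γT) ] / (4γ²·(exp(2γt) − exp(2γT))²), I2L(φ) := ( −exp(4γt) − 4γ(t−T)·exp(2γ(t+T)) + exp(4γT) ) / (2γ·(exp(2γt) − exp(2γT))²), I3L(φ) := [ exp(4γt)·(1−2γt) + 4γT·exp(2γ(t+T)) − (2γt+1)·exp(4γT) ] / (4γ²·(exp(2γt) − exp(2γT))²), and I4L(φ) := −1/(2γ). Then the limit of S(φ) as φ → 0⁺ exists and equals −( fa′/(2(T−t)) )·( 2(a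 − ā) + μ0·(T−t) ) − ( gb′/6 )·( 3(b − b̄) + η0·(T−t) ). -/

import Mathlib

open Real Filter Topology Set

noncomputable def PE (p0 p1 p2 c : ℝ) (u : ℝ → ℝ) : ℝ → ℝ := fun g => (p0 + p1*g + p2*g^2) * u g

lemma hasDerivAt_PE {u : ℝ → ℝ} {c : ℝ} (hu : ∀ y, HasDerivAt u (c * u y) y)
    (p0 p1 p2 x : ℝ) :
    HasDerivAt (PE p0 p1 p2 c u) (PE (p1 + c*p0) (2*p2 + c*p1) (c*p2) c u x) x := by
  have hp : HasDerivAt (fun g : ℝ => p0 + p1*g + p2*g^2) (p1 + 2*p2*x) x := by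
    have h := (((hasDerivAt_id x).const_mul p1).const_add p0).add
      ((hasDerivAt_pow 2 x).const_mul p2)
    refine h.congr_deriv ?_
    push_cast
    norm_num
    ring
  have h2 := hp.mul (hu x)
  refine h2.congr_deriv ?_
  simp only [PE]; ring

lemma continuous_PE {u : ℝ → ℝ} (hu : Continuous u) (p0 p1 p2 c : ℝ) :
    Continuous (PE p0 p1 p2 c u) := by
  unfold PE; fun_prop

lemma lhopN (f f' : ℝ → ℝ) (hf : ∀ x : ℝ, HasDerivAt f (f' x) x) (hf0 : f 0 = 0)
    (n : ℕ) (m : ℝ)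
    (h : Tendsto (fun x => f' x / x ^ n) (𝓝[>] (0:ℝ)) (𝓝 m)) :
    Tendsto (fun x => f x / x ^ (n+1)) (𝓝[>] (0:ℝ)) (𝓝 (m / (n+1))) := by
  have hd : Differentiable ℝ f := fun x => (hf x).differentiableAt
  have hfc : Continuous f := hd.continuous
  apply HasDerivAt.lhopital_zero_right_on_Ioo (a := 0) (b := 1) one_pos
    (f' := f') (g := fun x : ℝ => x ^ (n+1)) (g' := fun x : ℝ => ((n:ℝ)+1) * x ^ n)
    (fun x _ => hf x)
    (fun x _ => by simpa using hasDerivAt_pow (n+1) x)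
    (fun x hx => by have h1 := hx.1; positivity)
  · have := (hfc.tendsto 0).mono_left (nhdsWithin_le_nhds (s := Ioi (0:ℝ)))
    rwa [hf0] at this
  · have : Tendsto (fun x : ℝ => x ^ (n+1)) (𝓝 0) (𝓝 ((0:ℝ) ^ (n+1))) :=
      (continuous_pow (n+1)).tendsto 0
    rw [zero_pow (Nat.succ_ne_zero n)] at this
    exact this.mono_left nhdsWithin_le_nhds
  · have h2 := h.div_const ((n:ℝ)+1)
    apply h2.congr
    intro x
    rw [div_div, mul_comm]

noncomputable def u1 (t T : ℝ) : ℝ → ℝ := fun g => Real.exp (2*g*(t+T))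

lemma hu1 (t T : ℝ) : ∀ y, HasDerivAt (u1 t T) ((2*(t+T)) * u1 t T y) y := by
  intro y
  unfold u1
  have h : HasDerivAt (fun g : ℝ => 2*g*(t+T)) (2*(t+T)) y := by
    have h0 : HasDerivAt (fun g : ℝ => 2*g*(t+T)) (2*1*(t+T)) y := by
      exact ((hasDerivAt_id y).const_mul _).mul_const _
    convert h0 using 1
    ring
  have h2 := h.exp
  convert h2 using 1
  ring

noncomputable def u2 (t T : ℝ) : ℝ → ℝ := fun g => Real.exp (4*g*t)

lemma hu2 (t T : ℝ) : ∀ y, HasDerivAt (u2 t T) ((4*t) * u2 t T y) y := by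
  intro y
  unfold u2
  have h : HasDerivAt (fun g : ℝ => 4*g*t) (4*t) y := by
    have h0 : HasDerivAt (fun g : ℝ => 4*g*t) (4*1*t) y := by
      exact ((hasDerivAt_id y).const_mul _).mul_const _
    convert h0 using 1
    ring
  have h2 := h.exp
  convert h2 using 1
  ring

noncomputable def u3 (t T : ℝ) : ℝ → ℝ := fun g => Real.exp (4*g*T)

lemma hu3 (t T : ℝ) : ∀ y, HasDerivAt (u3 t T) ((4*T) * u3 t T y) y := by
  intro y
  unfold u3
  have h : HasDerivAt (fun g : ℝ => 4*g*T) (4*T) y := by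
    have h0 : HasDerivAt (fun g : ℝ => 4*g*T) (4*1*T) y := by
      exact ((hasDerivAt_id y).const_mul _).mul_const _
    convert h0 using 1
    ring
  have h2 := h.exp
  convert h2 using 1
  ring

noncomputable def u4 (t T : ℝ) : ℝ → ℝ := fun g => Real.exp (2*g*t)

lemma hu4 (t T : ℝ) : ∀ y, HasDerivAt (u4 t T) ((2*t) * u4 t T y) y := by
  intro y
  unfold u4
  have h : HasDerivAt (fun g : ℝ => 2*g*t) (2*t) y := by
    have h0 : HasDerivAt (fun g : ℝ => 2*g*t) (2*1*t) y := by
      exact ((hasDerivAt_id y).const_mul _).mul_const _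
    convert h0 using 1
    ring
  have h2 := h.exp
  convert h2 using 1
  ring

noncomputable def u5 (t T : ℝ) : ℝ → ℝ := fun g => Real.exp (2*g*T)

lemma hu5 (t T : ℝ) : ∀ y, HasDerivAt (u5 t T) ((2*T) * u5 t T y) y := by
  intro y
  unfold u5
  have h : HasDerivAt (fun g : ℝ => 2*g*T) (2*T) y := by
    have h0 : HasDerivAt (fun g : ℝ => 2*g*T) (2*1*T) y := by
      exact ((hasDerivAt_id y).const_mul _).mul_const _
    convert h0 using 1
    ring
  have h2 := h.exp
  convert h2 using 1
  ring

noncomputable def NA (t T : ℝ) : ℝ → ℝ := fun g => PE (-2) (0) (4*(T^2-t^2)) ((2*(t+T))) (u1 t T) g + PE (1) (-2*t) (0) ((4*t)) (u2 t T) g + PE (1) (2*t) (0) ((4*T)) (u3 t T) g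

noncomputable def NAd (t T : ℝ) : ℝ → ℝ := fun g => PE ((0 + (2*(t+T))*(-2))) ((2*(4*(T^2-t^2)) + (2*(t+T))*(0))) (((2*(t+T))*(4*(T^2-t^2)))) ((2*(t+T))) (u1 t T) g + PE ((-2*t + (4*t)*(1))) ((2*(0) + (4*t)*(-2*t))) (((4*t)*(0))) ((4*t)) (u2 t T) g + PE ((2*t + (4*T)*(1))) ((2*(0) + (4*T)*(2*t))) (((4*T)*(0))) ((4*T)) (u3 t T) g

noncomputable def NAdd (t T : ℝ) : ℝ → ℝ := fun g => PE (((2*(4*(T^2-t^2)) + (2*(t+T))*(0)) + (2*(t+T))*((0 + (2*(t+T))*(-2))))) ((2*(((2*(t+T))*(4*(T^2-t^2)))) + (2*(t+T))*((2*(4*(T^2-t^2)) + (2*(t+T))*(0))))) (((2*(t+T))*(((2*(t+T))*(4*(T^2-t^2)))))) ((2*(t+T))) (u1 t T) g + PE (((2*(0) + (4*t)*(-2*t)) + (4*t)*((-2*t + (4*t)*(1))))) ((2*(((4*t)*(0))) + (4*t)*((2*(0) + (4*t)*(-2*t))))) (((4*t)*(((4*t)*(0))))) ((4*t)) (u2 t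 T) g + PE (((2*(0) + (4*T)*(2*t)) + (4*T)*((2*t + (4*T)*(1))))) ((2*(((4*T)*(0))) + (4*T)*((2*(0) + (4*T)*(2*t))))) (((4*T)*(((4*T)*(0))))) ((4*T)) (u3 t T) g

noncomputable def NB (t T : ℝ) : ℝ → ℝ := fun g => PE (0) (-4*(t-T)) (0) ((2*(t+T))) (u1 t T) g + PE (-1) (0) (0) ((4*t)) (u2 t T) g + PE (1) (0) (0) ((4*T)) (u3 t T) g

noncomputable def NBd (t T : ℝ) : ℝ → ℝ := fun g => PE ((-4*(t-T) + (2*(t+T))*(0))) ((2*(0) + (2*(t+T))*(-4*(t-T)))) (((2*(t+T))*(0))) ((2*(t+T))) (u1 t T) g + PE ((0 + (4*t)*(-1))) ((2*(0) + (4*t)*(0))) (((4*t)*(0))) ((4*t)) (u2 t T) g + PE ((0 + (4*T)*(1))) ((2*(0) + (4*T)*(0))) (((4*T)*(0))) ((4*T)) (u3 t T) g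

noncomputable def NC (t T : ℝ) : ℝ → ℝ := fun g => PE (0) (4*T) (0) ((2*(t+T))) (u1 t T) g + PE (1) (-2*t) (0) ((4*t)) (u2 t T) g + PE (-1) (-2*t) (0) ((4*T)) (u3 t T) g

noncomputable def NCd (t T : ℝ) : ℝ → ℝ := fun g => PE ((4*T + (2*(t+T))*(0))) ((2*(0) + (2*(t+T))*(4*T))) (((2*(t+T))*(0))) ((2*(t+T))) (u1 t T) g + PE ((-2*t + (4*t)*(1))) ((2*(0) + (4*t)*(-2*t))) (((4*t)*(0))) ((4*t)) (u2 t T) g + PE ((-2*t + (4*T)*(-1))) ((2*(0) + (4*T)*(-2*t))) (((4*T)*(0))) ((4*T)) (u3 t T) g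

noncomputable def NCdd (t T : ℝ) : ℝ → ℝ := fun g => PE (((2*(0) + (2*(t+T))*(4*T)) + (2*(t+T))*((4*T + (2*(t+T))*(0))))) ((2*(((2*(t+T))*(0))) + (2*(t+T))*((2*(0) + (2*(t+T))*(4*T))))) (((2*(t+T))*(((2*(t+T))*(0))))) ((2*(t+T))) (u1 t T) g + PE (((2*(0) + (4*t)*(-2*t)) + (4*t)*((-2*t + (4*t)*(1))))) ((2*(((4*t)*(0))) + (4*t)*((2*(0) + (4*t)*(-2*t))))) (((4*t)*(((4*t)*(0))))) ((4*t)) (u2 t T) g + PE (((2*(0) + (4*T)*(-2*t)) + (4*T)*((-2*t + (4*T)*(-1))))) ((2*(((4*T)*(0))) + (4*T)*((2*(0) + (4*T)*(-2*t))))) (((4*T)*(((4*T)*(0))))) ((4*T)) (u3 t T) g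

noncomputable def NCddd (t T : ℝ) : ℝ → ℝ := fun g => PE (((2*(((2*(t+T))*(0))) + (2*(t+T))*((2*(0) + (2*(t+T))*(4*T)))) + (2*(t+T))*(((2*(0) + (2*(t+T))*(4*T)) + (2*(t+T))*((4*T + (2*(t+T))*(0))))))) ((2*(((2*(t+T))*(((2*(t+T))*(0))))) + (2*(t+T))*((2*(((2*(t+T))*(0))) + (2*(t+T))*((2*(0) + (2*(t+T))*(4*T))))))) (((2*(t+T))*(((2*(t+T))*(((2*(t+T))*(0))))))) ((2*(t+T))) (u1 t T) g + PE (((2*(((4*t)*(0))) + (4*t)*((2*(0) + (4*t)*(-2*t)))) + (4*t)*(((2*(0) + (4*t)*(-2*t)) + (4*t)*((-2*t + (4*t)*(1))))))) ((2*(((4*t)*(((4*t)*(0))))) + (4*t)*((2*(((4*t)*(0))) + (4*t)*((2*(0) + (4*t)*(-2*t))))))) (((4*t)*(((4*t)*(((4*t)*(0))))))) ((4*t)) (u2 t T) g + PE (((2*(((4*T)*(0))) + (4*T)*((2*(0) + (4*T)*(-2*t)))) + (4*T)*(((2*(0) + (4*T)*(-2*t)) + (4*T)*((-2*t + (4*T)*(-1)))))))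 ((2*(((4*T)*(((4*T)*(0))))) + (4*T)*((2*(((4*T)*(0))) + (4*T)*((2*(0) + (4*T)*(-2*t))))))) (((4*T)*(((4*T)*(((4*T)*(0))))))) ((4*T)) (u3 t T) g

noncomputable def ND (t T : ℝ) : ℝ → ℝ := fun g => PE (1) (0) (0) ((2*t)) (u4 t T) g + PE (-1) (0) (0) ((2*T)) (u5 t T) g

noncomputable def NDd (t T : ℝ) : ℝ → ℝ := fun g => PE ((0 + (2*t)*(1))) ((2*(0) + (2*t)*(0))) (((2*t)*(0))) ((2*t)) (u4 t T) g + PE ((0 + (2*T)*(-1))) ((2*(0) + (2*T)*(0))) (((2*T)*(0))) ((2*T)) (u5 t T) g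

lemma NA_hd (t T : ℝ) : ∀ x, HasDerivAt (NA t T) (NAd t T x) x := by
  intro x
  exact ((hasDerivAt_PE (hu1 t T) _ _ _ x).add (hasDerivAt_PE (hu2 t T) _ _ _ x)).add (hasDerivAt_PE (hu3 t T) _ _ _ x)

lemma NAd_hd (t T : ℝ) : ∀ x, HasDerivAt (NAd t T) (NAdd t T x) x := by
  intro x
  exact ((hasDerivAt_PE (hu1 t T) _ _ _ x).add (hasDerivAt_PE (hu2 t T) _ _ _ x)).add (hasDerivAt_PE (hu3 t T) _ _ _ x)

lemma NB_hd (t T : ℝ) : ∀ x, HasDerivAt (NB t T) (NBd t T x) x := by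
  intro x
  exact ((hasDerivAt_PE (hu1 t T) _ _ _ x).add (hasDerivAt_PE (hu2 t T) _ _ _ x)).add (hasDerivAt_PE (hu3 t T) _ _ _ x)

lemma NC_hd (t T : ℝ) : ∀ x, HasDerivAt (NC t T) (NCd t T x) x := by
  intro x
  exact ((hasDerivAt_PE (hu1 t T) _ _ _ x).add (hasDerivAt_PE (hu2 t T) _ _ _ x)).add (hasDerivAt_PE (hu3 t T) _ _ _ x)

lemma NCd_hd (t T : ℝ) : ∀ x, HasDerivAt (NCd t T) (NCdd t T x) x := by
  intro x
  exact ((hasDerivAt_PE (hu1 t T) _ _ _ x).add (hasDerivAt_PE (hu2 t T) _ _ _ x)).add (hasDerivAt_PE (hu3 t T) _ _ _ x)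

lemma NCdd_hd (t T : ℝ) : ∀ x, HasDerivAt (NCdd t T) (NCddd t T x) x := by
  intro x
  exact ((hasDerivAt_PE (hu1 t T) _ _ _ x).add (hasDerivAt_PE (hu2 t T) _ _ _ x)).add (hasDerivAt_PE (hu3 t T) _ _ _ x)

lemma ND_hd (t T : ℝ) : ∀ x, HasDerivAt (ND t T) (NDd t T x) x := by
  intro x
  exact (hasDerivAt_PE (hu4 t T) _ _ _ x).add (hasDerivAt_PE (hu5 t T) _ _ _ x)

lemma NAdd_cont (t T : ℝ) : Continuous (NAdd t T) := by
  unfold NAdd PE u1 u2 u3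
  fun_prop

lemma NBd_cont (t T : ℝ) : Continuous (NBd t T) := by
  unfold NBd PE u1 u2 u3
  fun_prop

lemma NCddd_cont (t T : ℝ) : Continuous (NCddd t T) := by
  unfold NCddd PE u1 u2 u3
  fun_prop

lemma NDd_cont (t T : ℝ) : Continuous (NDd t T) := by
  unfold NDd PE u4 u5
  fun_prop

lemma NA_zero (t T : ℝ) : NA t T 0 = 0 := by
  simp only [NA, PE, u1, u2, u3, mul_zero, zero_mul, ne_eq]
  norm_num
  try ring

lemma NAd_zero (t T : ℝ) : NAd t T 0 = 0 := by
  simp only [NAd, PE, u1, u2, u3, mul_zero, zero_mul, ne_eq]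
  norm_num
  try ring

lemma NB_zero (t T : ℝ) : NB t T 0 = 0 := by
  simp only [NB, PE, u1, u2, u3, mul_zero, zero_mul, ne_eq]
  norm_num
  try ring

lemma NC_zero (t T : ℝ) : NC t T 0 = 0 := by
  simp only [NC, PE, u1, u2, u3, mul_zero, zero_mul, ne_eq]
  norm_num
  try ring

lemma NCd_zero (t T : ℝ) : NCd t T 0 = 0 := by
  simp only [NCd, PE, u1, u2, u3, mul_zero, zero_mul, ne_eq]
  norm_num
  try ring

lemma NCdd_zero (t T : ℝ) : NCdd t T 0 = 0 := by
  simp only [NCdd, PE, u1, u2, u3, mul_zero, zero_mul, ne_eq]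
  norm_num
  try ring

lemma ND_zero (t T : ℝ) : ND t T 0 = 0 := by
  simp only [ND, PE, u4, u5, mul_zero, zero_mul, ne_eq]
  norm_num
  try ring

lemma tendsto_base (f : ℝ → ℝ) (hfc : Continuous f) (c : ℝ) (hval : f 0 = c) :
    Tendsto (fun x => f x / x ^ 0) (𝓝[>] (0:ℝ)) (𝓝 c) := by
  simp only [pow_zero, div_one]
  rw [← hval]
  exact (hfc.tendsto 0).mono_left nhdsWithin_le_nhds

lemma NA_lim (t T : ℝ) : Tendsto (fun g => NA t T g / g^2) (𝓝[>] (0:ℝ)) (𝓝 (8*(T^2-t^2))) := by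
  have b0 : Tendsto (fun x => NAdd t T x / x ^ 0) (𝓝[>] (0:ℝ)) (𝓝 (16*(T^2-t^2))) := by
    apply tendsto_base _ (NAdd_cont t T)
    simp only [NAdd, PE, u1, u2, u3, mul_zero, zero_mul]
    norm_num
    try ring
  have b1 := lhopN (NAd t T) (NAdd t T) (NAd_hd t T) (NAd_zero t T) 0 _ b0
  have b2 := lhopN (NA t T) (NAd t T) (NA_hd t T) (NA_zero t T) 1 _ b1
  convert b2 using 2
  norm_num
  try ring

lemma NB_lim (t T : ℝ) : Tendsto (fun g => NB t T g / g^1) (𝓝[>] (0:ℝ)) (𝓝 (8*(T-t))) := by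
  have b0 : Tendsto (fun x => NBd t T x / x ^ 0) (𝓝[>] (0:ℝ)) (𝓝 (8*(T-t))) := by
    apply tendsto_base _ (NBd_cont t T)
    simp only [NBd, PE, u1, u2, u3, mul_zero, zero_mul]
    norm_num
    try ring
  have b1 := lhopN (NB t T) (NBd t T) (NB_hd t T) (NB_zero t T) 0 _ b0
  convert b1 using 2
  norm_num
  try ring

lemma NC_lim (t T : ℝ) : Tendsto (fun g => NC t T g / g^3) (𝓝[>] (0:ℝ)) (𝓝 ((-8/3)*(T-t)^2*(T+2*t))) := by
  have b0 : Tendsto (fun x => NCddd t T x / x ^ 0) (𝓝[>] (0:ℝ)) (𝓝 (-16*(T-t)^2*(T+2*t))) := by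
    apply tendsto_base _ (NCddd_cont t T)
    simp only [NCddd, PE, u1, u2, u3, mul_zero, zero_mul]
    norm_num
    try ring
  have b1 := lhopN (NCdd t T) (NCddd t T) (NCdd_hd t T) (NCdd_zero t T) 0 _ b0
  have b2 := lhopN (NCd t T) (NCdd t T) (NCd_hd t T) (NCd_zero t T) 1 _ b1
  have b3 := lhopN (NC t T) (NCd t T) (NC_hd t T) (NC_zero t T) 2 _ b2
  convert b3 using 2
  norm_num
  try ring

lemma ND_lim (t T : ℝ) : Tendsto (fun g => ND t T g / g^1) (𝓝[>] (0:ℝ)) (𝓝 (2*t-2*T)) := by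
  have b0 : Tendsto (fun x => NDd t T x / x ^ 0) (𝓝[>] (0:ℝ)) (𝓝 (2*t-2*T)) := by
    apply tendsto_base _ (NDd_cont t T)
    simp only [NDd, PE, u4, u5, mul_zero, zero_mul]
    norm_num
    try ring
  have b1 := lhopN (ND t T) (NDd t T) (ND_hd t T) (ND_zero t T) 0 _ b0
  convert b1 using 2
  norm_num
  try ring

set_option maxHeartbeats 2000000 in
theorem stmt_19 (T fa fa' gb' μ0 η0 abar bbar a b : ℝ)
    (hT : 0 < T) (hfa : 0 < fa)
    (t : ℝ) (ht : t ∈ Set.Ico (0 : ℝ) T)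
    (γ : ℝ → ℝ) (hγ : ∀ φ : ℝ, γ φ = Real.sqrt (φ / fa))
    (S : ℝ → ℝ)
    (hS : ∀ φ : ℝ, 0 < φ →
        S φ = (-(γ φ) ^ 2 * fa' * μ0) *
            ((Real.exp (2 * γ φ * (t + T)) * (4 * (γ φ) ^ 2 * (T ^ 2 - t ^ 2) - 2)
                + Real.exp (4 * γ φ * t) * (1 - 2 * γ φ * t)
                + (2 * γ φ * t + 1) * Real.exp (4 * γ φ * T)) /
              (4 * (γ φ) ^ 2 * (Real.exp (2 * γ φ * t) - Real.exp (2 * γ φ * T)) ^ 2))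
          + (-(γ φ) ^ 2 * fa' * (a - abar - t * μ0)) *
            ((-Real.exp (4 * γ φ * t) - 4 * γ φ * (t - T) * Real.exp (2 * γ φ * (t + T))
                + Real.exp (4 * γ φ * T)) /
              (2 * γ φ * (Real.exp (2 * γ φ * t) - Real.exp (2 * γ φ * T)) ^ 2))
          + (γ φ * gb' * η0) *
            ((Real.exp (4 * γ φ * t) * (1 - 2 * γ φ * t)
                + 4 * γ φ * T * Real.exp (2 * γ φ * (t + T))
                - (2 * γ φ * t + 1) * Real.exp (4 * γ φ * T)) /
              (4 * (γ φ) ^ 2 * (Real.exp (2 * γ φ * t) - Real.exp (2 * γ φ * T)) ^ 2))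
          + (γ φ * gb' * (b - bbar - t * η0)) * (-(1 / (2 * γ φ)))) :
    Filter.Tendsto S (𝓝[>] 0)
      (𝓝 (-(fa' / (2 * (T - t))) * (2 * (a - abar) + μ0 * (T - t))
          - (gb' / 6) * (3 * (b - bbar) + η0 * (T - t)))) := by
  obtain ⟨ht0, htT⟩ := ht
  -- γ tends to 0 from the right
  have hγt : Tendsto γ (𝓝[>] (0:ℝ)) (𝓝[>] (0:ℝ)) := by
    rw [tendsto_nhdsWithin_iff]
    constructor
    · have hγfun : γ = fun φ => Real.sqrt (φ / fa) := funext hγ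
      rw [hγfun]
      have hc : Continuous fun φ : ℝ => Real.sqrt (φ / fa) := by fun_prop
      have h0 := (hc.tendsto 0).mono_left (nhdsWithin_le_nhds (s := Set.Ioi (0:ℝ)))
      simpa using h0
    · filter_upwards [self_mem_nhdsWithin] with φ hφ
      rw [hγ φ]
      exact Set.mem_Ioi.mpr (Real.sqrt_pos.mpr (div_pos hφ hfa))
  have h2t2T : (2*t - 2*T : ℝ) ≠ 0 := by intro h; nlinarith
  have hden2 : ((2*t - 2*T : ℝ))^2 ≠ 0 := pow_ne_zero 2 h2t2T
  have hTt : (T - t : ℝ) ≠ 0 := by intro h; nlinarith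
  -- the four pieces
  have hD := ND_lim t T
  have hDsq : Tendsto (fun g => (ND t T g / g^1)^2) (𝓝[>] (0:ℝ)) (𝓝 ((2*t-2*T)^2)) :=
    hD.pow 2
  have hGA := ((NA_lim t T).div hDsq hden2).const_mul (-(fa'*μ0)/4)
  have hGB := ((NB_lim t T).div hDsq hden2).const_mul (-(fa'*(a - abar - t*μ0))/2)
  have hGC := ((NC_lim t T).div hDsq hden2).const_mul ((gb'*η0)/4)
  have hG := ((hGA.add hGB).add hGC).add
    (tendsto_const_nhds (x := -(gb'*(b - bbar - t*η0))/2) (f := 𝓝[>] (0:ℝ)))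
  have hval : (-(fa'*μ0)/4 * (8*(T^2-t^2) / (2*t-2*T)^2)
      + -(fa'*(a - abar - t*μ0))/2 * (8*(T-t) / (2*t-2*T)^2)
      + (gb'*η0)/4 * ((-8/3)*(T-t)^2*(T+2*t) / (2*t-2*T)^2)
      + -(gb'*(b - bbar - t*η0))/2)
      = (-(fa' / (2 * (T - t))) * (2 * (a - abar) + μ0 * (T - t))
          - (gb' / 6) * (3 * (b - bbar) + η0 * (T - t))) := by
    rw [show (2*t-2*T)^2 = 4*(T-t)^2 by ring]
    field_simp
    ring
  rw [hval] at hG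
  -- the limit function in g
  have hF : Tendsto (fun g : ℝ =>
      (-g ^ 2 * fa' * μ0) *
            ((Real.exp (2 * g * (t + T)) * (4 * g ^ 2 * (T ^ 2 - t ^ 2) - 2)
                + Real.exp (4 * g * t) * (1 - 2 * g * t)
                + (2 * g * t + 1) * Real.exp (4 * g * T)) /
              (4 * g ^ 2 * (Real.exp (2 * g * t) - Real.exp (2 * g * T)) ^ 2))
          + (-g ^ 2 * fa' * (a - abar - t * μ0)) *
            ((-Real.exp (4 * g * t) - 4 * g * (t - T) * Real.exp (2 * g * (t + T))
                + Real.exp (4 * g * T)) /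
              (2 * g * (Real.exp (2 * g * t) - Real.exp (2 * g * T)) ^ 2))
          + (g * gb' * η0) *
            ((Real.exp (4 * g * t) * (1 - 2 * g * t)
                + 4 * g * T * Real.exp (2 * g * (t + T))
                - (2 * g * t + 1) * Real.exp (4 * g * T)) /
              (4 * g ^ 2 * (Real.exp (2 * g * t) - Real.exp (2 * g * T)) ^ 2))
          + (g * gb' * (b - bbar - t * η0)) * (-(1 / (2 * g)))) (𝓝[>] (0:ℝ))
      (𝓝 (-(fa' / (2 * (T - t))) * (2 * (a - abar) + μ0 * (T - t))
          - (gb' / 6) * (3 * (b - bbar) + η0 * (T - t)))) := by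
    apply Tendsto.congr' _ hG
    filter_upwards [self_mem_nhdsWithin] with g hg
    have hg' : (0:ℝ) < g := hg
    have hg0 : (g:ℝ) ≠ 0 := ne_of_gt hg'
    have hD0 : Real.exp (2*g*t) - Real.exp (2*g*T) ≠ 0 :=
      sub_ne_zero.mpr (ne_of_lt (Real.exp_lt_exp.mpr (by nlinarith)))
    have hND : ND t T g = Real.exp (2*g*t) - Real.exp (2*g*T) := by
      simp only [ND, PE, u4, u5]; ring
    simp only [Pi.div_apply]
    rw [hND]
    simp only [NA, NB, NC, PE, u1, u2, u3]
    set E : ℝ := Real.exp (2*g*t) - Real.exp (2*g*T) with hEdef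
    field_simp
    ring
  refine Tendsto.congr' ?_ (hF.comp hγt)
  filter_upwards [self_mem_nhdsWithin] with φ hφ
  exact (hS φ hφ).symm
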